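/- arXiv:2409.17149 — 4 statements merged into one kernel-verified Lean document; each statement's English description precedes it below -/
import Mathlib

section
/- For real β, γ > 0 with β ≠ γ, the integral ∫₀^∞ log(x) / ((x+β)(x+γ)) dx equals (log²(γ) − log²(β)) / (2(γ − β)). -/
open MeasureTheory Real Set Filter Topology

section Aux
variable {β γ : ℝ}

lemma Dpos (hβ : 0 < β) (hγ : 0 < γ) {x : ℝ} (hx : 0 ≤ x) :
    0 < (x + β) * (x + γ) :=
  mul_pos (by linarith) (by linarith)

lemma hasDeriv_g (hβ : 0 < β) (hγ : 0 < γ) (hne : β ≠ γ) {x : ℝ} (hx : 0 ≤ x) :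
    HasDerivAt (fun x => (Real.log (x + β) - Real.log (x + γ)) / (γ - β))
      (1 / ((x + β) * (x + γ))) x := by
  have h1 : x + β ≠ 0 := by positivity
  have h2 : x + γ ≠ 0 := by positivity
  have h3 : γ - β ≠ 0 := sub_ne_zero.mpr (Ne.symm hne)
  have d1 : HasDerivAt (fun x : ℝ => Real.log (x + β)) (1 / (x + β)) x := by
    simpa [Function.comp_def] using (Real.hasDerivAt_log h1).comp x ((hasDerivAt_id x).add_const β)
  have d2 : HasDerivAt (fun x : ℝ => Real.log (x + γ)) (1 / (x + γ)) x := by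
    simpa [Function.comp_def] using (Real.hasDerivAt_log h2).comp x ((hasDerivAt_id x).add_const γ)
  have hd := (d1.sub d2).div_const (γ - β)
  refine hd.congr_deriv ?_
  field_simp
  ring

lemma tendsto_g (hβ : 0 < β) (hγ : 0 < γ) :
    Tendsto (fun x => (Real.log (x + β) - Real.log (x + γ)) / (γ - β)) atTop (𝓝 0) := by
  have h1 : Tendsto (fun x : ℝ => (x + γ)⁻¹) atTop (𝓝 0) :=
    tendsto_inv_atTop_zero.comp (tendsto_atTop_add_const_right _ γ tendsto_id)
  have h2 : Tendsto (fun x : ℝ => 1 + (β - γ) * (x + γ)⁻¹) atTop (𝓝 1) := by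
    simpa using tendsto_const_nhds.add (h1.const_mul (β - γ))
  have h3 : Tendsto (fun x : ℝ => Real.log (1 + (β - γ) * (x + γ)⁻¹)) atTop (𝓝 0) := by
    simpa [Function.comp_def] using ((Real.continuousAt_log one_ne_zero).tendsto.comp h2)
  have h4 : (fun x : ℝ => Real.log (x + β) - Real.log (x + γ)) =ᶠ[atTop]
      fun x : ℝ => Real.log (1 + (β - γ) * (x + γ)⁻¹) := by
    filter_upwards [eventually_gt_atTop (0 : ℝ)] with x hx
    have hb : (0:ℝ) < x + β := by linarith
    have hg : (0:ℝ) < x + γ := by linarith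
    rw [← Real.log_div hb.ne' hg.ne']
    congr 1
    field_simp
    ring
  simpa using (h3.congr' h4.symm).div_const (γ - β)

lemma J_int (hβ : 0 < β) (hγ : 0 < γ) (hne : β ≠ γ) :
    IntegrableOn (fun x => 1 / ((x + β) * (x + γ))) (Ioi (0:ℝ)) :=
  integrableOn_Ioi_deriv_of_nonneg' (fun x hx => hasDeriv_g hβ hγ hne hx)
    (fun x hx => le_of_lt (one_div_pos.mpr (Dpos hβ hγ (le_of_lt hx)))) (tendsto_g hβ hγ)

lemma J_val (hβ : 0 < β) (hγ : 0 < γ) (hne : β ≠ γ) :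
    ∫ x in Ioi (0:ℝ), 1 / ((x + β) * (x + γ)) = (Real.log γ - Real.log β) / (γ - β) := by
  rw [integral_Ioi_of_hasDerivAt_of_nonneg' (fun x hx => hasDeriv_g hβ hγ hne hx)
    (fun x hx => le_of_lt (one_div_pos.mpr (Dpos hβ hγ (le_of_lt hx)))) (tendsto_g hβ hγ)]
  simp only [zero_add]
  ring

end Aux

section Aux2
variable {β γ : ℝ}

lemma f_contOn (hβ : 0 < β) (hγ : 0 < γ) :
    ContinuousOn (fun x => Real.log x / ((x + β) * (x + γ))) (Ioi (0:ℝ)) := by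
  apply ContinuousOn.div
  · exact Real.continuousOn_log.mono (fun x hx => ne_of_gt hx)
  · exact (Continuous.continuousOn (by continuity))
  · exact fun x hx => (Dpos hβ hγ (le_of_lt hx)).ne'

lemma f_int (hβ : 0 < β) (hγ : 0 < γ) :
    IntegrableOn (fun x => Real.log x / ((x + β) * (x + γ))) (Ioi (0:ℝ)) := by
  rw [← Ioc_union_Ioi_eq_Ioi (zero_le_one' ℝ), integrableOn_union]
  constructor
  · -- on Ioc 0 1
    have hmaj : IntegrableOn (fun x : ℝ => (β * γ)⁻¹ * (2 * x ^ (-(1/2) : ℝ))) (Ioc (0:ℝ) 1) := by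
      have : IntervalIntegrable (fun x : ℝ => x ^ (-(1/2) : ℝ)) volume 0 1 :=
        intervalIntegral.intervalIntegrable_rpow' (by norm_num)
      have h2 := (intervalIntegrable_iff_integrableOn_Ioc_of_le (zero_le_one' ℝ)).mp this
      exact (h2.const_mul 2).const_mul _
    apply Integrable.mono' hmaj
    · exact ((f_contOn hβ hγ).mono (Ioc_subset_Ioi_self)).aestronglyMeasurable measurableSet_Ioc
    · filter_upwards [ae_restrict_mem measurableSet_Ioc] with x hx
      have hx0 : 0 < x := hx.1
      have hx1 : x ≤ 1 := hx.2
      have hD : β * γ ≤ (x + β) * (x + γ) := by nlinarith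
      have hlog : |Real.log x| ≤ 2 * x ^ (-(1/2) : ℝ) := by
        rw [abs_of_nonpos (Real.log_nonpos hx0.le hx1), ← Real.log_inv]
        have := Real.log_le_rpow_div (le_of_lt (inv_pos.mpr hx0)) (by norm_num : (0:ℝ) < 1/2)
        rw [Real.rpow_neg hx0.le, ← Real.inv_rpow hx0.le]
        linarith
      calc |Real.log x / ((x + β) * (x + γ))|
          = |Real.log x| / ((x + β) * (x + γ)) := by
            rw [abs_div, abs_of_pos (Dpos hβ hγ hx0.le)]
        _ ≤ |Real.log x| / (β * γ) := by
            apply div_le_div_of_nonneg_left (abs_nonneg _) (by positivity) hD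
        _ = (β * γ)⁻¹ * |Real.log x| := by rw [div_eq_inv_mul]
        _ ≤ (β * γ)⁻¹ * (2 * x ^ (-(1/2) : ℝ)) := by
            apply mul_le_mul_of_nonneg_left hlog (by positivity)
  · -- on Ioi 1
    have hmaj : IntegrableOn (fun x : ℝ => 2 * x ^ (-(3/2) : ℝ)) (Ioi (1:ℝ)) :=
      (integrableOn_Ioi_rpow_of_lt (by norm_num) one_pos).const_mul 2
    apply Integrable.mono' hmaj
    · exact ((f_contOn hβ hγ).mono (Ioi_subset_Ioi zero_le_one)).aestronglyMeasurable
        measurableSet_Ioi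
    · filter_upwards [ae_restrict_mem measurableSet_Ioi] with x hx
      have hx1 : (1:ℝ) < x := hx
      have hx0 : (0:ℝ) < x := lt_trans zero_lt_one hx1
      have hlog : Real.log x ≤ 2 * x ^ ((1:ℝ)/2) := by
        have := Real.log_le_rpow_div hx0.le (by norm_num : (0:ℝ) < 1/2)
        calc Real.log x ≤ x ^ ((1:ℝ)/2) / (1/2) := this
          _ = 2 * x ^ ((1:ℝ)/2) := by ring
      have hD : x ^ (2:ℝ) ≤ (x + β) * (x + γ) := by
        rw [show x ^ (2:ℝ) = x ^ (2:ℕ) from Real.rpow_natCast x 2]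
        nlinarith
      calc |Real.log x / ((x + β) * (x + γ))|
          = Real.log x / ((x + β) * (x + γ)) := by
            rw [abs_of_nonneg (div_nonneg (Real.log_nonneg hx1.le) (Dpos hβ hγ hx0.le).le)]
        _ ≤ (2 * x ^ ((1:ℝ)/2)) / x ^ (2:ℝ) := by
            apply div_le_div₀ (by positivity) hlog (by positivity) hD
        _ = 2 * x ^ (-(3/2) : ℝ) := by
            rw [mul_div_assoc, ← Real.rpow_sub hx0]
            norm_num

end Aux2

section Aux3
variable {β γ : ℝ}

lemma hsub (hβ : 0 < β) (hγ : 0 < γ) :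
    ∫ x in Ioi (0:ℝ), Real.log x / ((x + β) * (x + γ)) =
      ∫ x in Ioi (0:ℝ), (Real.log (β * γ) - Real.log x) / ((x + β) * (x + γ)) := by
  set c := β * γ with hc_def
  have hc : 0 < c := mul_pos hβ hγ
  set f : ℝ → ℝ := fun x => Real.log x / ((x + β) * (x + γ)) with hf
  have step1 : (∫ x in Ioi (0:ℝ), f (c * x)) = c⁻¹ • ∫ x in Ioi (0:ℝ), f x := by
    simpa using integral_comp_mul_left_Ioi f 0 hc
  have step2 : (∫ x in Ioi (0:ℝ), (|(-1:ℝ)| * x ^ ((-1:ℝ) - 1)) • f (c * x ^ (-1:ℝ)))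
      = ∫ x in Ioi (0:ℝ), f (c * x) := integral_comp_rpow_Ioi (fun x => f (c * x)) (by norm_num)
  have step3 : (∫ x in Ioi (0:ℝ), (|(-1:ℝ)| * x ^ ((-1:ℝ) - 1)) • f (c * x ^ (-1:ℝ)))
      = ∫ x in Ioi (0:ℝ), c⁻¹ * ((Real.log c - Real.log x) / ((x + β) * (x + γ))) := by
    apply setIntegral_congr_fun measurableSet_Ioi
    intro x hx
    have hx0 : (0:ℝ) < x := hx
    have hxne : x ≠ 0 := hx0.ne'
    have h1 : x ^ (-1:ℝ) = x⁻¹ := Real.rpow_neg_one x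
    have h2 : x ^ ((-1:ℝ) - 1) = (x ^ (2:ℕ))⁻¹ := by
      rw [show ((-1:ℝ) - 1) = -((2:ℕ):ℝ) by norm_num, Real.rpow_neg hx0.le, Real.rpow_natCast]
    have hcx : 0 < c * x⁻¹ := mul_pos hc (inv_pos.mpr hx0)
    have hlog : Real.log (c * x⁻¹) = Real.log c - Real.log x := by
      rw [Real.log_mul hc.ne' (inv_ne_zero hxne), Real.log_inv]; ring
    simp only [h1, h2, hf, smul_eq_mul, abs_neg, abs_one, one_mul, hlog]
    have hxb : (0:ℝ) < x + β := by linarith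
    have hxg : (0:ℝ) < x + γ := by linarith
    have hd1 : c * x⁻¹ + β = β * (γ + x) / x := by field_simp [hc_def]; ring
    have hd2 : c * x⁻¹ + γ = γ * (β + x) / x := by field_simp [hc_def]; ring
    rw [hd1, hd2]
    field_simp [hc_def]
    ring
  have step4 : (∫ x in Ioi (0:ℝ), c⁻¹ * ((Real.log c - Real.log x) / ((x + β) * (x + γ))))
      = c⁻¹ * ∫ x in Ioi (0:ℝ), (Real.log c - Real.log x) / ((x + β) * (x + γ)) :=
    integral_const_mul _ _
  have := step3.symm.trans (step2.trans step1)
  rw [step4] at this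
  have h := congrArg (fun y => c * y) this
  simp only [smul_eq_mul, ← mul_assoc, mul_inv_cancel₀ hc.ne', one_mul] at h
  exact h.symm

end Aux3

theorem stmt0 (β γ : ℝ) (hβ : 0 < β) (hγ : 0 < γ) (hne : β ≠ γ) :
    ∫ x in Set.Ioi (0:ℝ), Real.log x / ((x + β) * (x + γ)) =
      ((Real.log γ) ^ 2 - (Real.log β) ^ 2) / (2 * (γ - β)) := by
  have hγβ : γ - β ≠ 0 := sub_ne_zero.mpr (Ne.symm hne)
  set I := ∫ x in Ioi (0:ℝ), Real.log x / ((x + β) * (x + γ)) with hI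
  have hsplit : (∫ x in Ioi (0:ℝ), (Real.log (β * γ) - Real.log x) / ((x + β) * (x + γ)))
      = Real.log (β * γ) * ((Real.log γ - Real.log β) / (γ - β)) - I := by
    have e : ∀ x ∈ Ioi (0:ℝ), (Real.log (β * γ) - Real.log x) / ((x + β) * (x + γ))
        = Real.log (β * γ) * (1 / ((x + β) * (x + γ))) - Real.log x / ((x + β) * (x + γ)) := by
      intro x hx
      have : (x + β) * (x + γ) ≠ 0 := (Dpos hβ hγ (le_of_lt hx)).ne'
      field_simp
    rw [setIntegral_congr_fun measurableSet_Ioi e,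
      integral_sub (((J_int hβ hγ hne).const_mul (Real.log (β * γ)))) (f_int hβ hγ),
      integral_const_mul, J_val hβ hγ hne]
  have key : I = Real.log (β * γ) * ((Real.log γ - Real.log β) / (γ - β)) - I :=
    calc I = ∫ x in Ioi (0:ℝ), (Real.log (β * γ) - Real.log x) / ((x + β) * (x + γ)) :=
        hsub hβ hγ
      _ = _ := hsplit
  rw [Real.log_mul hβ.ne' hγ.ne'] at key
  field_simp at key ⊢
  nlinarith [key]
end

section
/- For real b with b > 2, ∫₀^∞ log(x) / (x² − b x + 1) dx = 0. -/
open MeasureTheory Real Filter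

open Set Topology

noncomputable def pvf (r s x : ℝ) : ℝ := Real.log x / ((x - r) * (x - s))

lemma pvf_measurable (r s : ℝ) : Measurable (pvf r s) :=
  Real.measurable_log.div (((measurable_id.sub measurable_const)).mul
    ((measurable_id.sub measurable_const)))

lemma pvf_continuousOn {r s : ℝ} {A : Set ℝ} (hA : ∀ x ∈ A, x ≠ 0 ∧ x ≠ r ∧ x ≠ s) :
    ContinuousOn (pvf r s) A := by
  apply ContinuousOn.div
  · exact Real.continuousOn_log.mono (fun x hx => (hA x hx).1)
  · fun_prop
  · intro x hx
    exact mul_ne_zero (sub_ne_zero.mpr (hA x hx).2.1) (sub_ne_zero.mpr (hA x hx).2.2)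

lemma pvf_inv {r s : ℝ} (hrs : r * s = 1) {x : ℝ} (hx : x ≠ 0) :
    -((x:ℝ)^2)⁻¹ • pvf r s x⁻¹ = pvf r s x := by
  have hx2 : (x:ℝ)^2 ≠ 0 := pow_ne_zero _ hx
  have hden : (x⁻¹ - r) * (x⁻¹ - s) = ((x - r) * (x - s)) / x^2 := by
    field_simp
    linear_combination (x^2 - 1) * hrs
  rw [smul_eq_mul, pvf, pvf, Real.log_inv, hden, div_div_eq_mul_div]
  field_simp

lemma pvf_integral_inv {r s : ℝ} (hrs : r * s = 1) {a b : ℝ} (ha : 0 < a) (hab : a ≤ b)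
    (hcont : ContinuousOn (pvf r s) (Set.Icc b⁻¹ a⁻¹)) :
    ∫ x in a..b, pvf r s x = ∫ x in a⁻¹..b⁻¹, pvf r s x := by
  have hb : 0 < b := lt_of_lt_of_le ha hab
  have himg : Inv.inv '' (Set.uIcc a b) ⊆ Set.Icc b⁻¹ a⁻¹ := by
    rw [Set.uIcc_of_le hab]
    rintro _ ⟨y, hy, rfl⟩
    exact ⟨inv_anti₀ (lt_of_lt_of_le ha hy.1) hy.2,
      inv_anti₀ ha hy.1⟩
  have hne : ∀ x ∈ Set.uIcc a b, x ≠ 0 := by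
    rw [Set.uIcc_of_le hab]
    intro x hx
    exact ne_of_gt (lt_of_lt_of_le ha hx.1)
  have key := intervalIntegral.integral_comp_smul_deriv'' (a := a) (b := b)
    (f := Inv.inv) (f' := fun x => -((x:ℝ)^2)⁻¹) (g := pvf r s)
    (continuousOn_inv₀.mono (fun x hx => hne x hx))
    (fun x hx => (hasDerivAt_inv (by
      rw [min_eq_left hab, max_eq_right hab] at hx
      exact ne_of_gt (lt_trans ha hx.1))).hasDerivWithinAt)
    (ContinuousOn.neg (ContinuousOn.inv₀ (by fun_prop)
      (fun x hx => pow_ne_zero _ (hne x hx))))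
    (hcont.mono himg)
  rw [← key]
  exact intervalIntegral.integral_congr (fun x hx => (pvf_inv hrs (hne x hx)).symm)

lemma neg_log_le_rpow {x : ℝ} (hx : 0 < x) : -Real.log x ≤ 2 * x ^ (-(1/2) : ℝ) := by
  have h1 : Real.log (x ^ (-(1/2) : ℝ)) = -(1/2) * Real.log x := Real.log_rpow hx _
  have h2 : Real.log (x ^ (-(1/2) : ℝ)) ≤ x ^ (-(1/2) : ℝ) - 1 :=
    Real.log_le_sub_one_of_pos (Real.rpow_pos_of_pos hx _)
  have h3 : (0:ℝ) < x ^ (-(1/2) : ℝ) := Real.rpow_pos_of_pos hx _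
  nlinarith

lemma log_le_rpow {x : ℝ} (hx : 0 < x) : Real.log x ≤ 2 * x ^ ((1/2) : ℝ) := by
  have h1 : Real.log (x ^ ((1/2) : ℝ)) = (1/2) * Real.log x := Real.log_rpow hx _
  have h2 : Real.log (x ^ ((1/2) : ℝ)) ≤ x ^ ((1/2) : ℝ) - 1 :=
    Real.log_le_sub_one_of_pos (Real.rpow_pos_of_pos hx _)
  have h3 : (0:ℝ) < x ^ ((1/2) : ℝ) := Real.rpow_pos_of_pos hx _
  nlinarith

lemma pvf_integrableOn_left {r s : ℝ} (hr0 : 0 < r) (hr1 : r < 1) (hrs : r * s = 1)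
    {c : ℝ} (hc0 : 0 < c) (hcr : c < r) : IntegrableOn (pvf r s) (Set.Ioc 0 c) := by
  have hs1 : 1 < s := by nlinarith
  have hm : 0 < (r - c) * (s - c) := by nlinarith
  have hmaj : IntegrableOn (fun x : ℝ => ((r - c) * (s - c))⁻¹ *
      (2 * x ^ (-(1/2) : ℝ))) (Set.Ioc 0 c) := by
    apply Integrable.const_mul
    apply Integrable.const_mul
    have := (intervalIntegral.intervalIntegrable_rpow' (a := 0) (b := c)
      (r := (-(1/2) : ℝ)) (by norm_num))
    rw [intervalIntegrable_iff_integrableOn_Ioc_of_le (le_of_lt hc0)] at this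
    exact this
  refine Integrable.mono hmaj ((pvf_measurable r s).aestronglyMeasurable.restrict) ?_
  rw [ae_restrict_iff' measurableSet_Ioc]
  filter_upwards with x hx
  obtain ⟨hx0, hxc⟩ := hx
  have hx1 : x < 1 := lt_of_le_of_lt hxc (lt_trans hcr hr1)
  have hden : (0:ℝ) < (r - x) * (s - x) := by nlinarith
  have hdeq : |(x - r) * (x - s)| = (r - x) * (s - x) := by
    rw [abs_of_pos (by nlinarith : (0:ℝ) < (x - r) * (x - s))]
    ring
  have hlog : |Real.log x| = -Real.log x :=
    abs_of_nonpos (Real.log_nonpos (le_of_lt hx0) (le_of_lt hx1))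
  rw [pvf, Real.norm_eq_abs, abs_div, hdeq, hlog, Real.norm_eq_abs]
  have hb1 : -Real.log x ≤ 2 * x ^ (-(1/2) : ℝ) := neg_log_le_rpow hx0
  have hb2 : (r - c) * (s - c) ≤ (r - x) * (s - x) := by nlinarith
  have hrpos : (0:ℝ) ≤ 2 * x ^ (-(1/2) : ℝ) := by positivity
  calc -Real.log x / ((r - x) * (s - x)) ≤ (2 * x ^ (-(1/2) : ℝ)) / ((r - c) * (s - c)) := by
        apply div_le_div₀ (by positivity) hb1 hm hb2
    _ ≤ |((r - c) * (s - c))⁻¹ * (2 * x ^ (-(1/2) : ℝ))| := by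
        rw [abs_of_nonneg (by positivity)]
        rw [div_eq_inv_mul]

lemma pvf_integrableOn_right {r s : ℝ} (hr0 : 0 < r) (hr1 : r < 1) (hrs : r * s = 1)
    {c : ℝ} (hc : s < c) : IntegrableOn (pvf r s) (Set.Ioi c) := by
  have hs1 : 1 < s := by nlinarith
  have hrls : r < s := lt_trans hr1 hs1
  set X : ℝ := max c (2 * s) with hX
  have hcX : c ≤ X := le_max_left _ _
  have hX2s : 2 * s ≤ X := le_max_right _ _
  have hXpos : (0:ℝ) < X := lt_of_lt_of_le (by nlinarith) hX2s
  -- integrable on (X, ∞) by comparison with 8 x^(-3/2)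
  have htail : IntegrableOn (pvf r s) (Set.Ioi X) := by
    have hmaj : IntegrableOn (fun x : ℝ => 8 * x ^ (-(3/2) : ℝ)) (Set.Ioi X) :=
      (integrableOn_Ioi_rpow_of_lt (by norm_num) hXpos).const_mul 8
    refine Integrable.mono hmaj ((pvf_measurable r s).aestronglyMeasurable.restrict) ?_
    rw [ae_restrict_iff' measurableSet_Ioi]
    filter_upwards with x hx
    rw [Set.mem_Ioi] at hx
    have hxX : X < x := hx
    have hx2s : 2 * s < x := lt_of_le_of_lt hX2s hxX
    have hx1 : 1 < x := by nlinarith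
    have hxr : x / 2 ≤ x - r := by nlinarith
    have hxs : x / 2 ≤ x - s := by nlinarith
    have hden : x^2 / 4 ≤ (x - r) * (x - s) := by nlinarith
    have hlogpos : 0 ≤ Real.log x := Real.log_nonneg (le_of_lt hx1)
    rw [pvf, Real.norm_eq_abs, abs_div, abs_of_nonneg hlogpos,
      abs_of_pos (by nlinarith : (0:ℝ) < (x - r) * (x - s)), Real.norm_eq_abs,
      abs_of_nonneg (by positivity)]
    have hb1 : Real.log x ≤ 2 * x ^ ((1/2) : ℝ) := log_le_rpow (by linarith)
    have key : Real.log x / ((x - r) * (x - s)) ≤ (2 * x ^ ((1/2) : ℝ)) / (x^2 / 4) := by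
      apply div_le_div₀ (by positivity) hb1 (by positivity) hden
    refine le_trans key (le_of_eq ?_)
    have hx0 : (0:ℝ) < x := by linarith
    have hpow : (x:ℝ)^2 = x ^ ((2:ℝ)) := by
      rw [← Real.rpow_natCast x 2]; norm_num
    have hmul : x ^ (-(3/2) : ℝ) * x ^ ((2:ℝ)) = x ^ ((1/2):ℝ) := by
      rw [← Real.rpow_add hx0]; norm_num
    rw [div_div_eq_mul_div, div_eq_iff (by positivity), hpow]
    nlinarith [hmul]
  -- integrable on (c, X]
  have hmid : IntegrableOn (pvf r s) (Set.Ioc c X) := by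
    apply (ContinuousOn.integrableOn_Icc (pvf_continuousOn ?_)).mono_set Set.Ioc_subset_Icc_self
    intro x hx
    obtain ⟨hx1, hx2⟩ := hx
    have hx0 : 0 < x := by nlinarith
    refine ⟨ne_of_gt hx0, ?_, ?_⟩ <;> nlinarith
  have := hmid.union htail
  exact this.mono_set (by rw [Set.Ioc_union_Ioi_eq_Ioi hcX])

lemma pvf_integral_self_inv {r s : ℝ} (hr0 : 0 < r) (hr1 : r < 1) (hrs : r * s = 1)
    {a : ℝ} (har : r < a) (ha1 : a < 1) : ∫ x in a..a⁻¹, pvf r s x = 0 := by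
  have hs1 : 1 < s := by nlinarith
  have ha0 : 0 < a := lt_trans hr0 har
  have hainv : a ≤ a⁻¹ := by
    have h := mul_inv_cancel₀ (ne_of_gt ha0)
    nlinarith [inv_pos.mpr ha0]
  have hcont : ContinuousOn (pvf r s) (Set.Icc ((a⁻¹)⁻¹) (a⁻¹)) := by
    rw [inv_inv]
    apply pvf_continuousOn
    intro x hx
    obtain ⟨hx1, hx2⟩ := hx
    have hx0 : 0 < x := lt_of_lt_of_le ha0 hx1
    have hxs : x < s := by
      have h := mul_inv_cancel₀ (ne_of_gt ha0)
      have : a⁻¹ < s := by nlinarith [inv_pos.mpr ha0]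
      linarith
    exact ⟨ne_of_gt hx0, by nlinarith, ne_of_lt hxs⟩
  have key := pvf_integral_inv hrs ha0 hainv hcont
  rw [inv_inv] at key
  have symm : ∫ x in a⁻¹..a, pvf r s x = -∫ x in a..a⁻¹, pvf r s x :=
    intervalIntegral.integral_symm a a⁻¹
  linarith [key, symm]

lemma pvf_integral_Ioi {r s : ℝ} (hr0 : 0 < r) (hr1 : r < 1) (hrs : r * s = 1)
    {c : ℝ} (hc : s < c) :
    ∫ x in Set.Ioi c, pvf r s x = - ∫ x in Set.Ioc 0 c⁻¹, pvf r s x := by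
  have hs1 : 1 < s := by nlinarith
  have hc0 : 0 < c := by linarith
  have hcinv0 : 0 < c⁻¹ := inv_pos.mpr hc0
  have hcc : c * c⁻¹ = 1 := mul_inv_cancel₀ (ne_of_gt hc0)
  have hcinv_r : c⁻¹ < r := by nlinarith [mul_pos hr0 (sub_pos.mpr hc)]
  have hint : IntegrableOn (pvf r s) (Set.Ioi c) := pvf_integrableOn_right hr0 hr1 hrs hc
  have hleft : IntegrableOn (pvf r s) (Set.Ioc 0 c⁻¹) :=
    pvf_integrableOn_left hr0 hr1 hrs hcinv0 hcinv_r
  have h1 : Tendsto (fun n : ℕ => ∫ x in c..(c + (n:ℝ)), pvf r s x) atTop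
      (𝓝 (∫ x in Set.Ioi c, pvf r s x)) :=
    intervalIntegral_tendsto_integral_Ioi c hint
      (tendsto_atTop_add_const_left _ c tendsto_natCast_atTop_atTop)
  have hS : ∀ n : ℕ, (0:ℝ) < c + n := fun n => by positivity
  have hSle : ∀ n : ℕ, (c + (n:ℝ))⁻¹ ≤ c⁻¹ := fun n => by
    apply inv_anti₀ hc0; linarith [Nat.cast_nonneg (α := ℝ) n]
  have hU : (⋃ n : ℕ, Set.Ioc (c + (n:ℝ))⁻¹ c⁻¹) = Set.Ioc 0 c⁻¹ := by
    ext x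
    simp only [Set.mem_iUnion, Set.mem_Ioc]
    constructor
    · rintro ⟨n, h1, h2⟩
      exact ⟨lt_trans (inv_pos.mpr (hS n)) h1, h2⟩
    · rintro ⟨hx0, hxc⟩
      obtain ⟨n, hn⟩ := exists_nat_gt x⁻¹
      refine ⟨n, ?_, hxc⟩
      have hlt : x⁻¹ < c + n := by linarith
      have := (inv_lt_inv₀ (hS n) (inv_pos.mpr hx0)).mpr hlt
      rwa [inv_inv] at this
  have h2 : Tendsto (fun n : ℕ => ∫ x in Set.Ioc (c + (n:ℝ))⁻¹ c⁻¹, pvf r s x) atTop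
      (𝓝 (∫ x in Set.Ioc 0 c⁻¹, pvf r s x)) := by
    have := tendsto_setIntegral_of_monotone (μ := volume) (f := pvf r s)
      (s := fun n : ℕ => Set.Ioc (c + (n:ℝ))⁻¹ c⁻¹)
      (fun n => measurableSet_Ioc)
      (fun n m hnm => Set.Ioc_subset_Ioc_left (by
        apply inv_anti₀ (hS n)
        have : (n:ℝ) ≤ m := Nat.cast_le.mpr hnm
        linarith))
      (by rw [hU]; exact hleft)
    rwa [hU] at this
  have heq : ∀ n : ℕ, ∫ x in Set.Ioc (c + (n:ℝ))⁻¹ c⁻¹, pvf r s x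
      = - ∫ x in c..(c + (n:ℝ)), pvf r s x := by
    intro n
    have hcont : ContinuousOn (pvf r s) (Set.Icc ((c⁻¹)⁻¹) (((c + (n:ℝ))⁻¹)⁻¹)) := by
      rw [inv_inv, inv_inv]
      apply pvf_continuousOn
      intro x hx
      obtain ⟨hx1, _⟩ := hx
      exact ⟨(by nlinarith : (0:ℝ) < x).ne', (by nlinarith : r < x).ne',
        (by nlinarith : s < x).ne'⟩
    have key := pvf_integral_inv hrs (inv_pos.mpr (hS n)) (hSle n) hcont
    rw [inv_inv, inv_inv] at key
    rw [← intervalIntegral.integral_of_le (hSle n), key,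
      intervalIntegral.integral_symm]
  have h3 : Tendsto (fun n : ℕ => ∫ x in c..(c + (n:ℝ)), pvf r s x) atTop
      (𝓝 (- ∫ x in Set.Ioc 0 c⁻¹, pvf r s x)) := by
    have := h2.neg
    refine this.congr (fun n => ?_)
    rw [heq n]; ring
  exact tendsto_nhds_unique h1 h3

lemma pvf_pole_bound {r s : ℝ} (hr0 : 0 < r) (hr1 : r < 1) (hrs : r * s = 1) :
    ∃ M : ℝ, 0 ≤ M ∧ ∀ x ∈ Set.Icc (1:ℝ) (s+1), x ≠ s →
      ‖pvf r s x - (Real.log s / (s - r)) * (x - s)⁻¹‖ ≤ M := by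
  have hs1 : 1 < s := by nlinarith
  set g : ℝ → ℝ := fun x => Real.log x / (x - r) with hg
  set g' : ℝ → ℝ := fun x => (x⁻¹ * (x - r) - Real.log x * 1) / (x - r)^2 with hg'
  have hder : ∀ x ∈ Set.Icc (1:ℝ) (s+1), HasDerivWithinAt g (g' x) (Set.Icc 1 (s+1)) x := by
    intro x hx
    have hx0 : (0:ℝ) < x := lt_of_lt_of_le one_pos hx.1
    have hxr : x - r ≠ 0 := by nlinarith [hx.1]
    exact ((Real.hasDerivAt_log (ne_of_gt hx0)).div
      ((hasDerivAt_id x).sub_const r) hxr).hasDerivWithinAt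
  have hcont' : ContinuousOn g' (Set.Icc (1:ℝ) (s+1)) := by
    apply ContinuousOn.div
    · apply ContinuousOn.sub
      · exact (continuousOn_inv₀.mono (fun x hx => by
          simp only [Set.mem_compl_iff, Set.mem_singleton_iff]
          nlinarith [hx.1])).mul (by fun_prop)
      · exact (Real.continuousOn_log.mono (fun x hx => by
          simp only [Set.mem_compl_iff, Set.mem_singleton_iff]
          nlinarith [hx.1])).mul continuousOn_const
    · fun_prop
    · intro x hx
      have : x - r ≠ 0 := by nlinarith [hx.1]
      positivity
  obtain ⟨M, hM⟩ := (isCompact_Icc (a := (1:ℝ)) (b := s+1)).exists_bound_of_continuousOn hcont'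
  have hMnn : 0 ≤ M := le_trans (norm_nonneg _) (hM 1 ⟨le_refl _, by linarith⟩)
  refine ⟨M, hMnn, fun x hx hxs => ?_⟩
  have hsmem : s ∈ Set.Icc (1:ℝ) (s+1) := ⟨le_of_lt hs1, by linarith⟩
  have hlip : ‖g x - g s‖ ≤ M * ‖x - s‖ :=
    Convex.norm_image_sub_le_of_norm_hasDerivWithin_le hder hM (convex_Icc _ _) hsmem hx
  have hrepr : pvf r s x - (Real.log s / (s - r)) * (x - s)⁻¹ = (g x - g s) * (x - s)⁻¹ := by
    rw [pvf]
    have key : Real.log x / ((x - r) * (x - s)) = (Real.log x / (x - r)) * (x - s)⁻¹ := by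
      rw [← div_div, div_eq_mul_inv]
    rw [key, hg]
    ring
  rw [hrepr]
  rw [norm_mul]
  have hxs' : ‖(x - s)⁻¹‖ = ‖x - s‖⁻¹ := by rw [norm_inv]
  rw [hxs']
  have hxsne : ‖x - s‖ ≠ 0 := by
    simp only [ne_eq, norm_eq_zero]
    exact sub_ne_zero.mpr hxs
  calc ‖g x - g s‖ * ‖x - s‖⁻¹ ≤ (M * ‖x - s‖) * ‖x - s‖⁻¹ := by
        apply mul_le_mul_of_nonneg_right hlip (by positivity)
    _ = M := by rw [mul_assoc, mul_inv_cancel₀ hxsne, mul_one]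

lemma pvf_decomp {r s : ℝ} (hr0 : 0 < r) (hr1 : r < 1) (hrs : r * s = 1)
    {u v : ℝ} (hru : r < u) (huv : u ≤ v) (hside : v < s ∨ s < u) :
    ∫ x in u..v, pvf r s x = (Real.log s / (s - r)) * Real.log ((v - s)/(u - s))
      + ∫ x in u..v, (pvf r s x - (Real.log s / (s - r)) * (x - s)⁻¹) := by
  have hs1 : 1 < s := by nlinarith
  have hu0 : 0 < u := lt_trans hr0 hru
  have hsne : ∀ x ∈ Set.uIcc u v, x ≠ s := by
    rw [Set.uIcc_of_le huv]
    intro x hx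
    rcases hside with h | h
    · exact ne_of_lt (lt_of_le_of_lt hx.2 h)
    · exact ne_of_gt (lt_of_lt_of_le h hx.1)
  have hint1 : IntervalIntegrable (pvf r s) volume u v := by
    apply ContinuousOn.intervalIntegrable
    apply pvf_continuousOn
    intro x hx
    have hx' := hx
    rw [Set.uIcc_of_le huv] at hx'
    exact ⟨ne_of_gt (lt_of_lt_of_le hu0 hx'.1),
      ne_of_gt (lt_of_lt_of_le hru hx'.1), hsne x hx⟩
  have hint2 : IntervalIntegrable (fun x => (Real.log s / (s - r)) * (x - s)⁻¹) volume u v := by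
    apply ContinuousOn.intervalIntegrable
    apply ContinuousOn.mul continuousOn_const
    apply ContinuousOn.inv₀ (by fun_prop)
    intro x hx
    exact sub_ne_zero.mpr (hsne x hx)
  rw [intervalIntegral.integral_sub hint1 hint2, intervalIntegral.integral_const_mul]
  have hshift : ∫ x in u..v, (x - s)⁻¹ = Real.log ((v - s)/(u - s)) := by
    have := intervalIntegral.integral_comp_sub_right (a := u) (b := v)
      (fun y : ℝ => y⁻¹) s
    rw [this]
    rw [show (fun y : ℝ => y⁻¹) = fun y : ℝ => 1/y by funext y; rw [one_div]]
    apply integral_one_div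
    intro h0
    rw [Set.uIcc_of_le (by linarith : u - s ≤ v - s)] at h0
    rcases hside with h | h
    · exact absurd h0.2 (by simp; linarith)
    · exact absurd h0.1 (by simp; linarith)
  rw [hshift]
  ring


lemma inv_le_of_one_le_mul' {a c : ℝ} (ha : 0 < a) (h : 1 ≤ c * a) : a⁻¹ ≤ c := by
  have h2 := mul_le_mul_of_nonneg_right h (le_of_lt (inv_pos.mpr ha))
  rwa [one_mul, mul_assoc, mul_inv_cancel₀ (ne_of_gt ha), mul_one] at h2

lemma le_inv_of_mul_le_one' {a c : ℝ} (ha : 0 < a) (h : c * a ≤ 1) : c ≤ a⁻¹ := by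
  have h2 := mul_le_mul_of_nonneg_right h (le_of_lt (inv_pos.mpr ha))
  rwa [one_mul, mul_assoc, mul_inv_cancel₀ (ne_of_gt ha), mul_one] at h2

lemma inv_lt_of_one_lt_mul' {a c : ℝ} (ha : 0 < a) (h : 1 < c * a) : a⁻¹ < c := by
  have h2 := mul_lt_mul_of_pos_right h (inv_pos.mpr ha)
  rwa [one_mul, mul_assoc, mul_inv_cancel₀ (ne_of_gt ha), mul_one] at h2

lemma lt_inv_of_mul_lt_one' {a c : ℝ} (ha : 0 < a) (h : c * a < 1) : c < a⁻¹ := by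
  have h2 := mul_lt_mul_of_pos_right h (inv_pos.mpr ha)
  rwa [one_mul, mul_assoc, mul_inv_cancel₀ (ne_of_gt ha), mul_one] at h2

set_option maxHeartbeats 1000000

/-- For `b > 2` the quadratic `x² − bx + 1` has two positive roots
`r₁ = (b − √(b²−4))/2 < r₂ = (b + √(b²−4))/2`; the principal value of
`∫₀^∞ log x/(x² − bx + 1) dx` at these poles is `0`. -/
theorem stmt7 (b : ℝ) (hb : 2 < b) :
    Tendsto (fun ε : ℝ =>
        (∫ x in Set.Ioo (0:ℝ) ((b - Real.sqrt (b ^ 2 - 4)) / 2 - ε),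
            Real.log x / (x ^ 2 - b * x + 1)) +
        (∫ x in Set.Ioo ((b - Real.sqrt (b ^ 2 - 4)) / 2 + ε)
            ((b + Real.sqrt (b ^ 2 - 4)) / 2 - ε),
            Real.log x / (x ^ 2 - b * x + 1)) +
        (∫ x in Set.Ioi ((b + Real.sqrt (b ^ 2 - 4)) / 2 + ε),
            Real.log x / (x ^ 2 - b * x + 1)))
      (nhdsWithin 0 (Set.Ioi 0)) (nhds 0) := by
  have hb4 : (0:ℝ) ≤ b ^ 2 - 4 := by nlinarith
  have hd2 : Real.sqrt (b ^ 2 - 4) ^ 2 = b ^ 2 - 4 := Real.sq_sqrt hb4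
  have hd0 : 0 ≤ Real.sqrt (b ^ 2 - 4) := Real.sqrt_nonneg _
  have hdpos : 0 < Real.sqrt (b ^ 2 - 4) := Real.sqrt_pos.mpr (by nlinarith)
  set d := Real.sqrt (b ^ 2 - 4) with hddef
  set r := (b - d) / 2 with hrdef
  set s := (b + d) / 2 with hsdef
  have hdb : d < b := by nlinarith
  have hr0 : 0 < r := by rw [hrdef]; linarith
  have hrs : r * s = 1 := by
    rw [hrdef, hsdef]
    linear_combination (-(1:ℝ)/4) * hd2
  have hsr : s - r = d := by rw [hrdef, hsdef]; ring
  have hr1 : r < 1 := by nlinarith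
  have hs0 : 0 < s := by rw [hsdef]; linarith
  have hs1 : 1 < s := by nlinarith
  have hfact : ∀ x : ℝ, Real.log x / (x ^ 2 - b * x + 1) = pvf r s x := by
    intro x
    rw [pvf]
    congr 1
    rw [hrdef, hsdef]
    linear_combination ((1:ℝ)/4) * hd2
  simp only [hfact]
  obtain ⟨M, hM0, hM⟩ := pvf_pole_bound hr0 hr1 hrs
  set gs := Real.log s / (s - r) with hgs
  set ε₀ : ℝ := min ((1 - r)/2) (r/(2*(s+1))) with hε₀def
  have hε₀pos : 0 < ε₀ := lt_min (by linarith) (by positivity)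
  set G : ℝ → ℝ := fun ε => (gs * Real.log ((r + ε)/s) + gs * Real.log (s/(r - ε)))
    + ((∫ x in (r+ε)⁻¹..(s-ε), (pvf r s x - gs * (x - s)⁻¹))
     + (∫ x in (s+ε)..((r-ε)⁻¹), (pvf r s x - gs * (x - s)⁻¹))) with hGdef
  -- basic facts valid for all ε in (0, ε₀)
  have hord : ∀ ε : ℝ, ε ∈ Set.Ioo (0:ℝ) ε₀ →
      ε < r/2 ∧ r + ε < 1 ∧ ε < s - r ∧ (s+1) * ε ≤ r := by
    intro ε hε
    have hε1 : ε < (1 - r)/2 := lt_of_lt_of_le hε.2 (min_le_left _ _)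
    have hε2 : ε < r/(2*(s+1)) := lt_of_lt_of_le hε.2 (min_le_right _ _)
    have hε2' : ε * (2*(s+1)) < r := by
      rw [lt_div_iff₀ (by positivity)] at hε2
      exact hε2
    refine ⟨by nlinarith, by nlinarith, by nlinarith, by nlinarith⟩
  -- the ordering facts needed repeatedly
  have hkey : ∀ ε : ℝ, ε ∈ Set.Ioo (0:ℝ) ε₀ →
      (0 < r - ε) ∧ ((r+ε)⁻¹ < s) ∧ ((r-ε)⁻¹ ≤ 2*s) ∧ ((r+ε)⁻¹ ≤ s - ε)
      ∧ (s + ε ≤ (r-ε)⁻¹) ∧ (1 ≤ (r+ε)⁻¹) ∧ ((r-ε)⁻¹ ≤ s + 1)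
      ∧ (s < (r-ε)⁻¹) ∧ (r + ε ≤ (r+ε)⁻¹) := by
    intro ε hε
    obtain ⟨hεr2, hre1, hεsr, hεs1⟩ := hord ε hε
    have hε0 : 0 < ε := hε.1
    have hre0 : 0 < r - ε := by linarith
    have hrε0 : 0 < r + ε := by linarith
    refine ⟨hre0,
      inv_lt_of_one_lt_mul' hrε0 (by nlinarith),
      inv_le_of_one_le_mul' hre0 (by nlinarith),
      inv_le_of_one_le_mul' hrε0 (by nlinarith),
      le_inv_of_mul_le_one' hre0 (by nlinarith),
      le_inv_of_mul_le_one' hrε0 (by nlinarith),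
      inv_le_of_one_le_mul' hre0 (by nlinarith),
      lt_inv_of_mul_lt_one' hre0 (by nlinarith),
      le_inv_of_mul_le_one' hrε0 (by nlinarith)⟩
  -- part B : the limit of G
  have hlim12 : Tendsto (fun ε : ℝ => gs * Real.log ((r + ε)/s) + gs * Real.log (s/(r - ε)))
      (𝓝[>] (0:ℝ)) (𝓝 0) := by
    have hc : ContinuousAt (fun ε : ℝ => gs * Real.log ((r + ε)/s)
        + gs * Real.log (s/(r - ε))) 0 := by
      apply ContinuousAt.add
      · apply ContinuousAt.mul continuousAt_const
        apply ContinuousAt.log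
        · exact ContinuousAt.div_const (by fun_prop) s
        · simp only [add_zero]
          positivity
      · apply ContinuousAt.mul continuousAt_const
        apply ContinuousAt.log
        · exact ContinuousAt.div continuousAt_const (by fun_prop)
            (by simp only [sub_zero]; exact ne_of_gt hr0)
        · simp only [sub_zero]
          positivity
    have hval : gs * Real.log ((r + (0:ℝ))/s) + gs * Real.log (s/(r - 0)) = 0 := by
      rw [add_zero, sub_zero, Real.log_div (ne_of_gt hr0) (ne_of_gt hs0),
        Real.log_div (ne_of_gt hs0) (ne_of_gt hr0)]
      ring
    have h' : Tendsto (fun ε : ℝ => gs * Real.log ((r + ε)/s) + gs * Real.log (s/(r - ε)))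
        (𝓝[>] (0:ℝ)) (𝓝 (gs * Real.log ((r + (0:ℝ))/s) + gs * Real.log (s/(r - 0)))) :=
      hc.tendsto.mono_left nhdsWithin_le_nhds
    rwa [hval] at h'
  have hlim3 : Tendsto (fun ε : ℝ =>
      (∫ x in (r+ε)⁻¹..(s-ε), (pvf r s x - gs * (x - s)⁻¹))
      + (∫ x in (s+ε)..((r-ε)⁻¹), (pvf r s x - gs * (x - s)⁻¹)))
      (𝓝[>] (0:ℝ)) (𝓝 0) := by
    have hC : Tendsto (fun ε : ℝ => (3*M*s/r) * ε) (𝓝[>] (0:ℝ)) (𝓝 0) := by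
      have h1 : Tendsto (fun ε : ℝ => (3*M*s/r) * ε) (𝓝 (0:ℝ)) (𝓝 ((3*M*s/r) * 0)) :=
        (continuous_const.mul continuous_id).tendsto 0
      rw [mul_zero] at h1
      exact h1.mono_left nhdsWithin_le_nhds
    refine squeeze_zero_norm' ?_ hC
    filter_upwards [Ioo_mem_nhdsGT_of_mem (Set.mem_Ico.mpr ⟨le_refl (0:ℝ), hε₀pos⟩)]
      with ε hε
    obtain ⟨hre0, hws1', hws2, hu1le, hu2le, hu1ge1, hv2le, hss, hre_inv⟩ := hkey ε hε
    obtain ⟨hεr2, hre1, hεsr, hεs1⟩ := hord ε hε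
    have hε0 : 0 < ε := hε.1
    have hrε0 : 0 < r + ε := by linarith
    have hw1 : (r+ε) * (r+ε)⁻¹ = 1 := mul_inv_cancel₀ (ne_of_gt hrε0)
    have hw2 : (r-ε) * (r-ε)⁻¹ = 1 := mul_inv_cancel₀ (ne_of_gt hre0)
    have hb1 : ‖∫ x in (r+ε)⁻¹..(s-ε), (pvf r s x - gs * (x - s)⁻¹)‖
        ≤ M * |(s-ε) - (r+ε)⁻¹| := by
      apply intervalIntegral.norm_integral_le_of_norm_le_const
      intro x hx
      rw [Set.uIoc_of_le hu1le] at hx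
      exact hM x ⟨le_trans hu1ge1 (le_of_lt hx.1), by linarith [hx.2]⟩
        (by linarith [hx.2] : x ≠ s)
    have hb2 : ‖∫ x in (s+ε)..((r-ε)⁻¹), (pvf r s x - gs * (x - s)⁻¹)‖
        ≤ M * |(r-ε)⁻¹ - (s+ε)| := by
      apply intervalIntegral.norm_integral_le_of_norm_le_const
      intro x hx
      rw [Set.uIoc_of_le hu2le] at hx
      exact hM x ⟨by linarith [hx.1], le_trans hx.2 hv2le⟩
        (by linarith [hx.1] : x ≠ s)
    have hlen1 : |(s-ε) - (r+ε)⁻¹| ≤ (s/r) * ε := by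
      rw [abs_of_nonneg (by linarith)]
      rw [show (s/r) * ε = (s*ε)/r from by ring, le_div_iff₀ hr0]
      nlinarith [hw1, inv_pos.mpr hrε0, hws1']
    have hlen2 : |(r-ε)⁻¹ - (s+ε)| ≤ (2*s/r) * ε := by
      rw [abs_of_nonneg (by linarith)]
      rw [show (2*s/r) * ε = (2*s*ε)/r from by ring, le_div_iff₀ hr0]
      nlinarith [hw2, inv_pos.mpr hre0, hws2]
    calc ‖(∫ x in (r+ε)⁻¹..(s-ε), (pvf r s x - gs * (x - s)⁻¹))
        + (∫ x in (s+ε)..((r-ε)⁻¹), (pvf r s x - gs * (x - s)⁻¹))‖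
        ≤ ‖∫ x in (r+ε)⁻¹..(s-ε), (pvf r s x - gs * (x - s)⁻¹)‖
          + ‖∫ x in (s+ε)..((r-ε)⁻¹), (pvf r s x - gs * (x - s)⁻¹)‖ := norm_add_le _ _
      _ ≤ M * ((s/r) * ε) + M * ((2*s/r) * ε) :=
          add_le_add (le_trans hb1 (mul_le_mul_of_nonneg_left hlen1 hM0))
            (le_trans hb2 (mul_le_mul_of_nonneg_left hlen2 hM0))
      _ = (3*M*s/r) * ε := by ring
  have hGlim : Tendsto G (𝓝[>] (0:ℝ)) (𝓝 0) := by
    rw [hGdef]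
    simpa using hlim12.add hlim3
  -- part A : eventual equality
  have hEq : ∀ᶠ ε in 𝓝[>] (0:ℝ),
      ((∫ x in Set.Ioo (0:ℝ) (r - ε), pvf r s x) +
       (∫ x in Set.Ioo (r + ε) (s - ε), pvf r s x) +
       (∫ x in Set.Ioi (s + ε), pvf r s x)) = G ε := by
    filter_upwards [Ioo_mem_nhdsGT_of_mem (Set.mem_Ico.mpr ⟨le_refl (0:ℝ), hε₀pos⟩)]
      with ε hε
    obtain ⟨hre0, hws1', hws2, hu1le, hu2le, hu1ge1, hv2le, hss, hre_inv⟩ := hkey ε hε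
    obtain ⟨hεr2, hre1, hεsr, hεs1⟩ := hord ε hε
    have hε0 : 0 < ε := hε.1
    have hrε0 : 0 < r + ε := by linarith
    have hw1 : (r+ε) * (r+ε)⁻¹ = 1 := mul_inv_cancel₀ (ne_of_gt hrε0)
    have hw2 : (r-ε) * (r-ε)⁻¹ = 1 := mul_inv_cancel₀ (ne_of_gt hre0)
    have hrre : r < r + ε := by linarith
    have hmidle : r + ε ≤ s - ε := by nlinarith
    have hsse : s < s + ε := by linarith
    -- middle integral
    have hmid : (∫ x in Set.Ioo (r + ε) (s - ε), pvf r s x)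
        = ∫ x in (r+ε)⁻¹..(s-ε), pvf r s x := by
      rw [← integral_Ioc_eq_integral_Ioo, ← intervalIntegral.integral_of_le hmidle]
      have hi1 : IntervalIntegrable (pvf r s) volume (r+ε) ((r+ε)⁻¹) := by
        apply ContinuousOn.intervalIntegrable
        apply pvf_continuousOn
        intro x hx
        rw [Set.uIcc_of_le hre_inv] at hx
        exact ⟨(by linarith [hx.1] : (0:ℝ) < x).ne', (by linarith [hx.1] : r < x).ne',
          (by linarith [hx.2, hws1'] : x < s).ne⟩
      have hi2 : IntervalIntegrable (pvf r s) volume ((r+ε)⁻¹) (s-ε) := by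
        apply ContinuousOn.intervalIntegrable
        apply pvf_continuousOn
        intro x hx
        rw [Set.uIcc_of_le hu1le] at hx
        exact ⟨(by linarith [hx.1] : (0:ℝ) < x).ne', (by linarith [hx.1] : r < x).ne',
          (by linarith [hx.2] : x < s).ne⟩
      rw [← intervalIntegral.integral_add_adjacent_intervals hi1 hi2,
        pvf_integral_self_inv hr0 hr1 hrs hrre hre1, zero_add]
    -- tail integral
    have htail : (∫ x in Set.Ioi (s + ε), pvf r s x)
        = (∫ x in (s+ε)..((r-ε)⁻¹), pvf r s x) - ∫ x in Set.Ioc 0 (r - ε), pvf r s x := by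
      have hsplit : Set.Ioc (s+ε) ((r-ε)⁻¹) ∪ Set.Ioi ((r-ε)⁻¹) = Set.Ioi (s+ε) :=
        Set.Ioc_union_Ioi_eq_Ioi hu2le
      have hint_all := pvf_integrableOn_right hr0 hr1 hrs hsse
      have hint_a : IntegrableOn (pvf r s) (Set.Ioc (s+ε) ((r-ε)⁻¹)) :=
        hint_all.mono_set Set.Ioc_subset_Ioi_self
      have hint_b : IntegrableOn (pvf r s) (Set.Ioi ((r-ε)⁻¹)) :=
        pvf_integrableOn_right hr0 hr1 hrs hss
      rw [← hsplit, setIntegral_union (Set.Ioc_disjoint_Ioi le_rfl) measurableSet_Ioi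
        hint_a hint_b]
      rw [pvf_integral_Ioi hr0 hr1 hrs hss, inv_inv,
        intervalIntegral.integral_of_le hu2le]
      ring
    -- decompose the two interval integrals
    have hdec1 := pvf_decomp hr0 hr1 hrs (lt_of_lt_of_le (by linarith : r < 1) hu1ge1)
      hu1le (Or.inl (by linarith : s - ε < s))
    have hdec2 := pvf_decomp hr0 hr1 hrs (by linarith : r < s + ε) hu2le
      (Or.inr hsse)
    have hratio1 : ((s - ε) - s)/((r+ε)⁻¹ - s) = (r+ε)/s := by
      rw [div_eq_div_iff (ne_of_lt (by linarith [hws1'] : (r+ε)⁻¹ - s < 0)) (ne_of_gt hs0)]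
      linear_combination hrs - hw1
    have hratio2 : ((r-ε)⁻¹ - s)/((s + ε) - s) = s/(r-ε) := by
      rw [div_eq_div_iff (by simp only [add_sub_cancel_left]; exact ne_of_gt hε0)
        (ne_of_gt hre0)]
      linear_combination hw2 - hrs
    rw [hmid, htail, hdec1, hdec2, hratio1, hratio2, ← integral_Ioc_eq_integral_Ioo,
      hGdef]
    ring
  exact Tendsto.congr' (Filter.EventuallyEq.symm hEq) hGlim
end

section
/- For real v with 0 < v < 2, v ≠ 1, and real b, γ > 0 with b ≠ γ, ∫₀^∞ x^{v−1} / ((x+b)(x+γ)²) dx = (π b^{v−1} / (sin(πv)(γ−b)²)) · (1 − (γ/b)^{v−1}·(1 + (1−v)(γ−b)/γ)). -/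
open MeasureTheory Real

open Set


lemma cfn_eq (u w : ℝ) : ∀ x ∈ Ioo (0:ℝ) 1,
    ((x:ℂ) ^ ((u:ℂ) - 1) * (1 - (x:ℂ)) ^ ((w:ℂ) - 1)) = ((x ^ (u-1) * (1-x) ^ (w-1) : ℝ) : ℂ) := by
  intro x hx
  rw [show ((u:ℂ) - 1) = ((u - 1 : ℝ) : ℂ) by push_cast; ring,
    show (1 - (x:ℂ)) = ((1 - x : ℝ) : ℂ) by push_cast; ring,
    show ((w:ℂ) - 1) = ((w - 1 : ℝ) : ℂ) by push_cast; ring,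
    ← Complex.ofReal_cpow hx.1.le, ← Complex.ofReal_cpow (by linarith [hx.2]), ← Complex.ofReal_mul]

lemma realBeta_int (u w : ℝ) (hu : 0 < u) (hw : 0 < w) :
    IntegrableOn (fun x : ℝ => x ^ (u-1) * (1-x) ^ (w-1)) (Ioo 0 1) := by
  have h2 := Complex.betaIntegral_convergent (u := (u:ℂ)) (v := (w:ℂ)) (by simpa) (by simpa)
  have h3 : IntegrableOn (fun x : ℝ => (x:ℂ) ^ ((u:ℂ) - 1) * (1 - (x:ℂ)) ^ ((w:ℂ) - 1)) (Ioo 0 1) := by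
    have := (intervalIntegrable_iff_integrableOn_Ioo_of_le (by norm_num : (0:ℝ) ≤ 1)).mp h2
    exact this
  have h4 := h3.congr_fun (cfn_eq u w) measurableSet_Ioo
  have h5 : IntegrableOn (fun x : ℝ => ((x ^ (u-1) * (1-x) ^ (w-1) : ℝ) : ℂ).re) (Ioo 0 1) :=
    h4.re
  simpa using h5

lemma realBeta_eq (u w : ℝ) (hu : 0 < u) (hw : 0 < w) :
    ∫ x in Ioo (0:ℝ) 1, x ^ (u-1) * (1-x) ^ (w-1) = Gamma u * Gamma w / Gamma (u+w) := by
  have h := Complex.Gamma_mul_Gamma_eq_betaIntegral (s := (u:ℂ)) (t := (w:ℂ)) (by simpa) (by simpa)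
  rw [Complex.betaIntegral] at h
  rw [intervalIntegral.integral_of_le (by norm_num : (0:ℝ) ≤ 1),
    integral_Ioc_eq_integral_Ioo,
    setIntegral_congr_fun measurableSet_Ioo (cfn_eq u w)] at h
  have hio : (∫ x in Ioo (0:ℝ) 1, ((x ^ (u-1) * (1-x) ^ (w-1) : ℝ) : ℂ)) =
      (((∫ x in Ioo (0:ℝ) 1, x ^ (u-1) * (1-x) ^ (w-1)) : ℝ) : ℂ) := integral_ofReal
  rw [hio, show ((u:ℂ) + w) = ((u + w : ℝ) : ℂ) by push_cast; ring,
    Complex.Gamma_ofReal, Complex.Gamma_ofReal, Complex.Gamma_ofReal] at h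
  have hne : Gamma (u + w) ≠ 0 := (Real.Gamma_pos_of_pos (by linarith)).ne'
  have h2 : Gamma u * Gamma w = Gamma (u+w) * ∫ x in Ioo (0:ℝ) 1, x ^ (u-1) * (1-x) ^ (w-1) := by
    exact_mod_cast h
  field_simp
  linarith [h2]
lemma phi_img (c : ℝ) (hc : 0 < c) : (fun x : ℝ => c * x / (1 - x)) '' Ioo 0 1 = Ioi 0 := by
  ext t
  constructor
  · rintro ⟨x, hx, rfl⟩
    have h1 : 0 < 1 - x := by linarith [hx.2]
    exact div_pos (mul_pos hc hx.1) h1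
  · intro ht
    have ht' : 0 < t := ht
    refine ⟨t / (t + c), ⟨by positivity, ?_⟩, ?_⟩
    · rw [div_lt_one (by positivity)]; linarith
    · show c * (t / (t + c)) / (1 - t / (t + c)) = t
      have h1 : 1 - t / (t + c) = c / (t + c) := by field_simp; ring
      rw [h1]
      field_simp

lemma phi_inj (c : ℝ) (hc : 0 < c) : InjOn (fun x : ℝ => c * x / (1 - x)) (Ioo 0 1) := by
  intro x hx y hy h
  simp only at h
  have h1 : (1:ℝ) - x ≠ 0 := by intro h'; linarith [hx.2]
  have h2 : (1:ℝ) - y ≠ 0 := by intro h'; linarith [hy.2]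
  field_simp at h
  nlinarith [h]

lemma phi_deriv (c : ℝ) : ∀ x ∈ Ioo (0:ℝ) 1,
    HasDerivWithinAt (fun x : ℝ => c * x / (1 - x)) (c / (1 - x) ^ 2) (Ioo 0 1) x := by
  intro x hx
  have h1 : (1:ℝ) - x ≠ 0 := by intro h'; linarith [hx.2]
  have h := ((hasDerivAt_id x).const_mul c).div ((hasDerivAt_id x).const_sub 1) h1
  simp only [id_eq, mul_one] at h
  have e : (c * (1 - x) - c * x * (-1)) / (1 - x) ^ 2 = c / (1 - x) ^ 2 := by
    rw [div_eq_div_iff (by positivity) (by positivity)]; ring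
  rw [e] at h
  exact h.hasDerivWithinAt

lemma key_eq (a s c : ℝ) (hs : 0 < s) (hsa : s < a) (hc : 0 < c) :
    ∀ x ∈ Ioo (0:ℝ) 1, |c / (1 - x) ^ 2| • ((c * x / (1 - x)) ^ (s-1) / (c * x / (1 - x) + c) ^ a)
      = c ^ (s - a) * (x ^ (s-1) * (1 - x) ^ (a - s - 1)) := by
  intro x hx
  have hx0 : 0 < x := hx.1
  have hx1 : 0 < 1 - x := by linarith [hx.2]
  have e2 : c * x / (1 - x) + c = c / (1 - x) := by field_simp; ring
  have hphi : 0 < c * x / (1 - x) := div_pos (mul_pos hc hx0) hx1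
  have hL : 0 < |c / (1 - x) ^ 2| • ((c * x / (1 - x)) ^ (s-1) / (c * x / (1 - x) + c) ^ a) := by
    rw [e2, smul_eq_mul, abs_of_pos (by positivity)]
    positivity
  have hR : 0 < c ^ (s - a) * (x ^ (s-1) * (1 - x) ^ (a - s - 1)) := by positivity
  rw [← Real.exp_log hL, ← Real.exp_log hR]
  congr 1
  rw [e2, smul_eq_mul, abs_of_pos (by positivity)]
  simp (disch := positivity) only [Real.log_mul, Real.log_div, Real.log_rpow, Real.log_pow]
  push_cast
  ring

lemma betaIoi (a s c : ℝ) (hs : 0 < s) (hsa : s < a) (hc : 0 < c) :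
    IntegrableOn (fun x : ℝ => x ^ (s-1) / (x + c) ^ a) (Ioi 0) ∧
    ∫ x in Ioi (0:ℝ), x ^ (s-1) / (x + c) ^ a = c ^ (s - a) * (Gamma s * Gamma (a - s) / Gamma a) := by
  have hderiv := phi_deriv c
  have hinj := phi_inj c hc
  have himg := phi_img c hc
  have hkey := key_eq a s c hs hsa hc
  have hbint : IntegrableOn (fun x : ℝ => c ^ (s - a) * (x ^ (s-1) * (1 - x) ^ (a - s - 1))) (Ioo 0 1) :=
    (realBeta_int s (a - s) hs (by linarith)).const_mul (c ^ (s - a))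
  constructor
  · rw [← himg]
    rw [integrableOn_image_iff_integrableOn_abs_deriv_smul measurableSet_Ioo hderiv hinj]
    exact hbint.congr_fun (fun x hx => (hkey x hx).symm) measurableSet_Ioo
  · rw [← himg, integral_image_eq_integral_abs_deriv_smul measurableSet_Ioo hderiv hinj,
      setIntegral_congr_fun measurableSet_Ioo hkey, integral_const_mul,
      realBeta_eq s (a - s) hs (by linarith), show s + (a - s) = a by ring]
lemma sinlem (v : ℝ) (hv0 : 0 < v) (hv2 : v < 2) (hv1 : v ≠ 1) : Real.sin (π * v) ≠ 0 := by
  rcases lt_or_gt_of_ne hv1 with h | h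
  · have : 0 < Real.sin (π * v) :=
      Real.sin_pos_of_pos_of_lt_pi (by positivity) (by nlinarith [Real.pi_pos])
    exact this.ne'
  · have h1 : Real.sin (π * v) = -Real.sin (π * (v - 1)) := by
      rw [show π * v = π * (v - 1) + π by ring, Real.sin_add_pi]
    have h2 : 0 < Real.sin (π * (v - 1)) :=
      Real.sin_pos_of_pos_of_lt_pi (by nlinarith [Real.pi_pos]) (by nlinarith [Real.pi_pos])
    rw [h1, neg_ne_zero]
    exact h2.ne'

lemma Llem (s c : ℝ) (hs0 : 0 < s) (hs1 : s < 1) (hc : 0 < c) :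
    IntegrableOn (fun x : ℝ => x ^ (s-1) / (x + c)) (Ioi 0) ∧
    ∫ x in Ioi (0:ℝ), x ^ (s-1) / (x + c) = π * c ^ (s-1) / Real.sin (π * s) := by
  obtain ⟨h1, h2⟩ := betaIoi 1 s c hs0 hs1 hc
  have he : (fun x : ℝ => x ^ (s-1) / (x + c) ^ (1:ℝ)) = fun x : ℝ => x ^ (s-1) / (x + c) := by
    funext x; rw [Real.rpow_one]
  rw [he] at h1 h2
  refine ⟨h1, ?_⟩
  rw [h2, show (1:ℝ) - s = 1 - s by ring, Real.Gamma_one, Real.Gamma_mul_Gamma_one_sub s]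
  field_simp

lemma Klem (v c : ℝ) (hv0 : 0 < v) (hv2 : v < 2) (hv1 : v ≠ 1) (hc : 0 < c) :
    IntegrableOn (fun x : ℝ => x ^ (v-1) / (x + c) ^ 2) (Ioi 0) ∧
    ∫ x in Ioi (0:ℝ), x ^ (v-1) / (x + c) ^ 2 = π * (1 - v) * c ^ (v-2) / Real.sin (π * v) := by
  obtain ⟨h1, h2⟩ := betaIoi 2 v c hv0 hv2 hc
  have he : (fun x : ℝ => x ^ (v-1) / (x + c) ^ (2:ℝ)) = fun x : ℝ => x ^ (v-1) / (x + c) ^ 2 := by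
    funext x
    rw [show ((x + c) ^ (2:ℝ)) = (x + c) ^ (2:ℕ) by rw [← Real.rpow_natCast (x+c) 2]; norm_num]
  rw [he] at h1 h2
  refine ⟨h1, ?_⟩
  have hg2 : Real.Gamma 2 = 1 := by
    rw [show (2:ℝ) = 1 + 1 by norm_num, Real.Gamma_add_one one_ne_zero, Real.Gamma_one]; ring
  have hg : Real.Gamma (2 - v) = (1 - v) * Real.Gamma (1 - v) := by
    rw [show (2:ℝ) - v = (1 - v) + 1 by ring, Real.Gamma_add_one (by intro h; apply hv1; linarith)]
  have hrefl := Real.Gamma_mul_Gamma_one_sub v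
  rw [h2, hg, hg2, div_one,
    show Real.Gamma v * ((1-v) * Real.Gamma (1-v)) = (1-v) * (Real.Gamma v * Real.Gamma (1-v)) by ring,
    hrefl]
  field_simp
lemma Jlem (v b γ : ℝ) (hv0 : 0 < v) (hv2 : v < 2) (hv1 : v ≠ 1) (hb : 0 < b)
    (hγ : 0 < γ) (hne : b ≠ γ) :
    IntegrableOn (fun x : ℝ => x ^ (v-1) / ((x + b) * (x + γ))) (Ioi 0) ∧
    ∫ x in Ioi (0:ℝ), x ^ (v-1) / ((x + b) * (x + γ)) =
      π * (b ^ (v-1) - γ ^ (v-1)) / (Real.sin (π * v) * (γ - b)) := by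
  have hgb : γ - b ≠ 0 := sub_ne_zero.mpr (Ne.symm hne)
  have hsin := sinlem v hv0 hv2 hv1
  rcases lt_or_gt_of_ne hv1 with h | h
  · obtain ⟨Ib, Lb⟩ := Llem v b hv0 h hb
    obtain ⟨Ig, Lg⟩ := Llem v γ hv0 h hγ
    have key : ∀ x ∈ Ioi (0:ℝ), x ^ (v-1) / ((x + b) * (x + γ)) =
        (γ - b)⁻¹ * (x ^ (v-1) / (x + b) - x ^ (v-1) / (x + γ)) := by
      intro x hx
      have hx0 : (0:ℝ) < x := hx
      have h1 : x + b ≠ 0 := by positivity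
      have h2 : x + γ ≠ 0 := by positivity
      field_simp
      ring
    have Isum : IntegrableOn
        (fun x : ℝ => (γ - b)⁻¹ * (x ^ (v-1) / (x + b) - x ^ (v-1) / (x + γ))) (Ioi 0) :=
      (Ib.sub Ig).const_mul ((γ - b)⁻¹)
    constructor
    · exact Isum.congr_fun (fun x hx => (key x hx).symm) measurableSet_Ioi
    · rw [setIntegral_congr_fun measurableSet_Ioi key, integral_const_mul,
        integral_sub Ib Ig, Lb, Lg]
      field_simp
  · have hw0 : 0 < v - 1 := by linarith
    have hw1 : v - 1 < 1 := by linarith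
    obtain ⟨Ib, Lb⟩ := Llem (v-1) b hw0 hw1 hb
    obtain ⟨Ig, Lg⟩ := Llem (v-1) γ hw0 hw1 hγ
    have key : ∀ x ∈ Ioi (0:ℝ), x ^ (v-1) / ((x + b) * (x + γ)) =
        (γ / (γ - b)) * (x ^ (v-1-1) / (x + γ)) - (b / (γ - b)) * (x ^ (v-1-1) / (x + b)) := by
      intro x hx
      have hx0 : (0:ℝ) < x := hx
      have h1 : x + b ≠ 0 := by positivity
      have h2 : x + γ ≠ 0 := by positivity
      rw [show v - 1 = (v-1-1) + 1 by ring, Real.rpow_add_one hx0.ne']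
      field_simp
      ring
    have Ig' := Ig.const_mul (γ / (γ - b))
    have Ib' := Ib.const_mul (b / (γ - b))
    have Isum : IntegrableOn
        (fun x : ℝ => (γ / (γ - b)) * (x ^ (v-1-1) / (x + γ))
          - (b / (γ - b)) * (x ^ (v-1-1) / (x + b))) (Ioi 0) := Ig'.sub Ib'
    constructor
    · exact Isum.congr_fun (fun x hx => (key x hx).symm) measurableSet_Ioi
    · rw [setIntegral_congr_fun measurableSet_Ioi key, integral_sub Ig' Ib',
        integral_const_mul, integral_const_mul, Lb, Lg]
      have hsin' : Real.sin (π * (v - 1)) = -Real.sin (π * v) := by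
        rw [show π * (v - 1) = π * v - π by ring, Real.sin_sub_pi]
      rw [hsin',
        show γ ^ (v-1) = γ ^ (v-1-1) * γ by
          rw [← Real.rpow_add_one hγ.ne']; norm_num,
        show b ^ (v-1) = b ^ (v-1-1) * b by
          rw [← Real.rpow_add_one hb.ne']; norm_num]
      field_simp
      ring
theorem stmt12 (v b γ : ℝ) (hv0 : 0 < v) (hv2 : v < 2) (hv1 : v ≠ 1) (hb : 0 < b)
    (hγ : 0 < γ) (hne : b ≠ γ) :
    ∫ x in Set.Ioi (0:ℝ), x ^ (v - 1) / ((x + b) * (x + γ) ^ 2) =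
      (π * b ^ (v - 1) / (Real.sin (π * v) * (γ - b) ^ 2)) *
        (1 - (γ / b) ^ (v - 1) * (1 + (1 - v) * (γ - b) / γ)) := by
  have hgb : γ - b ≠ 0 := sub_ne_zero.mpr (Ne.symm hne)
  have hsin := sinlem v hv0 hv2 hv1
  obtain ⟨IJ, J⟩ := Jlem v b γ hv0 hv2 hv1 hb hγ hne
  obtain ⟨IK, K⟩ := Klem v γ hv0 hv2 hv1 hγ
  have key : ∀ x ∈ Ioi (0:ℝ), x ^ (v-1) / ((x + b) * (x + γ) ^ 2) =
      (γ - b)⁻¹ * (x ^ (v-1) / ((x + b) * (x + γ)) - x ^ (v-1) / (x + γ) ^ 2) := by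
    intro x hx
    have hx0 : (0:ℝ) < x := hx
    have h1 : x + b ≠ 0 := by positivity
    have h2 : x + γ ≠ 0 := by positivity
    field_simp
    ring
  rw [setIntegral_congr_fun measurableSet_Ioi key, integral_const_mul,
    integral_sub IJ IK, J, K]
  have e1 : (γ / b) ^ (v-1) = γ ^ (v-1) / b ^ (v-1) := Real.div_rpow hγ.le hb.le _
  have e2 : γ ^ (v-2) = γ ^ (v-1) / γ := by
    rw [show v - 2 = (v-1) - 1 by ring, Real.rpow_sub hγ, Real.rpow_one]
  rw [e1, e2]
  have hbv : b ^ (v-1) ≠ 0 := by positivity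
  field_simp
  ring
end

section
/- For real α > 0 and θ ∈ (0, π), ∫₀^∞ log(x) / (x² + 2αx cos(θ) + α²) dx = θ·log(α) / (α sin θ). -/
open MeasureTheory Real Set Filter Topology

private lemma q_pos {c s : ℝ} (hs : 0 < s) (hcs : c ^ 2 + s ^ 2 = 1) (u : ℝ) :
    0 < u ^ 2 + 2 * c * u + 1 := by nlinarith [sq_nonneg (u + c)]

private lemma q_hasDeriv {c s : ℝ} (hs : 0 < s) (hcs : c ^ 2 + s ^ 2 = 1) (u : ℝ) :
    HasDerivAt (fun u : ℝ => arctan ((u + c) / s) / s)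
      (1 / (u ^ 2 + 2 * c * u + 1)) u := by
  have h1 : HasDerivAt (fun u : ℝ => (u + c) / s) (1 / s) u := by
    simpa using ((hasDerivAt_id u).add_const c).div_const s
  have h2 := ((Real.hasDerivAt_arctan ((u + c) / s)).comp u h1).div_const s
  refine h2.congr_deriv ?_
  have hq := q_pos hs hcs u
  have h3 : 1 + ((u + c) / s) ^ 2 = (u ^ 2 + 2 * c * u + 1) / s ^ 2 := by
    field_simp
    nlinarith [hcs]
  rw [h3]
  field_simp

private lemma q_tendsto {c s : ℝ} (hs : 0 < s) :
    Tendsto (fun u : ℝ => arctan ((u + c) / s) / s) atTop (𝓝 (π / 2 / s)) := by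
  have h1 : Tendsto (fun u : ℝ => (u + c) / s) atTop atTop :=
    Tendsto.atTop_div_const hs (tendsto_atTop_add_const_right _ c tendsto_id)
  exact ((Real.tendsto_arctan_atTop.mono_right nhdsWithin_le_nhds).comp h1).div_const s

private lemma q_integrable {c s : ℝ} (hs : 0 < s) (hcs : c ^ 2 + s ^ 2 = 1) :
    IntegrableOn (fun u : ℝ => 1 / (u ^ 2 + 2 * c * u + 1)) (Ioi 0) :=
  integrableOn_Ioi_deriv_of_nonneg
    ((q_hasDeriv hs hcs 0).continuousAt.continuousWithinAt)
    (fun x _ => q_hasDeriv hs hcs x)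
    (fun x _ => (div_pos one_pos (q_pos hs hcs x)).le)
    (q_tendsto hs)

private lemma q_integral {c s : ℝ} (hs : 0 < s) (hcs : c ^ 2 + s ^ 2 = 1) :
    ∫ u in Ioi (0 : ℝ), 1 / (u ^ 2 + 2 * c * u + 1) =
      π / 2 / s - arctan (c / s) / s := by
  have := integral_Ioi_of_hasDerivAt_of_tendsto
    ((q_hasDeriv hs hcs 0).continuousAt.continuousWithinAt)
    (fun x _ => q_hasDeriv hs hcs x) (q_integrable hs hcs) (q_tendsto hs)
  simpa using this

private lemma logq_cont {c s : ℝ} (hs : 0 < s) (hcs : c ^ 2 + s ^ 2 = 1) :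
    ContinuousOn (fun u : ℝ => Real.log u / (u ^ 2 + 2 * c * u + 1)) (Ioi 0) := by
  apply ContinuousOn.div
  · exact Real.continuousOn_log.mono (fun x hx => by
      simp only [mem_compl_iff, mem_singleton_iff]
      exact ne_of_gt hx)
  · fun_prop
  · exact fun x _ => (q_pos hs hcs x).ne'

private lemma logq_integrable {c s : ℝ} (hs : 0 < s) (hcs : c ^ 2 + s ^ 2 = 1) :
    IntegrableOn (fun u : ℝ => Real.log u / (u ^ 2 + 2 * c * u + 1)) (Ioi 0) := by
  have hunion : Ioc (0 : ℝ) 1 ∪ Ioi 1 = Ioi 0 := Ioc_union_Ioi_eq_Ioi zero_le_one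
  rw [← hunion]
  apply IntegrableOn.union
  · -- on (0,1]
    have hg : IntegrableOn (fun u : ℝ => 2 / s ^ 2 * u ^ (-(1:ℝ)/2)) (Ioc 0 1) := by
      have : IntervalIntegrable (fun u : ℝ => u ^ (-(1:ℝ)/2)) volume 0 1 :=
        intervalIntegral.intervalIntegrable_rpow' (by norm_num)
      rw [intervalIntegrable_iff_integrableOn_Ioc_of_le zero_le_one] at this
      exact this.const_mul _
    apply Integrable.mono' hg
    · exact ((logq_cont hs hcs).mono Ioc_subset_Ioi_self).aestronglyMeasurable
        measurableSet_Ioc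
    · filter_upwards [ae_restrict_mem measurableSet_Ioc] with u hu
      have hu0 : 0 < u := hu.1
      have hq := q_pos hs hcs u
      have hqs : s ^ 2 ≤ u ^ 2 + 2 * c * u + 1 := by nlinarith [sq_nonneg (u + c)]
      have hlog : |Real.log u| ≤ 2 * u ^ (-(1:ℝ)/2) := by
        rw [abs_le]
        constructor
        · have h1 : Real.log u⁻¹ ≤ (u⁻¹) ^ ((1:ℝ)/2) / ((1:ℝ)/2) :=
            Real.log_le_rpow_div (inv_nonneg.mpr hu0.le) (by norm_num)
          rw [Real.log_inv] at h1
          have h2 : (u⁻¹) ^ ((1:ℝ)/2) = u ^ (-(1:ℝ)/2) := by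
            rw [← Real.rpow_neg_one, ← Real.rpow_mul hu0.le]
            norm_num
          rw [h2] at h1
          linarith
        · have : Real.log u ≤ 0 := Real.log_nonpos hu0.le hu.2
          have : (0:ℝ) ≤ 2 * u ^ (-(1:ℝ)/2) := by positivity
          linarith
      rw [Real.norm_eq_abs, abs_div, abs_of_pos hq]
      rw [div_le_iff₀ hq]
      calc |Real.log u| ≤ 2 * u ^ (-(1:ℝ)/2) := hlog
        _ = 2 / s ^ 2 * u ^ (-(1:ℝ)/2) * s ^ 2 := by field_simp
        _ ≤ 2 / s ^ 2 * u ^ (-(1:ℝ)/2) * (u ^ 2 + 2 * c * u + 1) := by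
            apply mul_le_mul_of_nonneg_left hqs
            positivity
  · -- on (1,∞)
    have hg : IntegrableOn (fun u : ℝ => 8 / s ^ 2 * u ^ (-(3:ℝ)/2)) (Ioi 1) := by
      have : IntegrableOn (fun u : ℝ => u ^ (-(3:ℝ)/2)) (Ioi 1) :=
        integrableOn_Ioi_rpow_of_lt (by norm_num) one_pos
      exact this.const_mul _
    apply Integrable.mono' hg
    · exact ((logq_cont hs hcs).mono (Ioi_subset_Ioi zero_le_one)).aestronglyMeasurable
        measurableSet_Ioi
    · filter_upwards [ae_restrict_mem measurableSet_Ioi] with u hu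
      have hu1 : (1:ℝ) < u := hu
      have hu0 : (0:ℝ) < u := lt_trans one_pos hu1
      have hq := q_pos hs hcs u
      have hqu : s ^ 2 * u ^ 2 ≤ 4 * (u ^ 2 + 2 * c * u + 1) := by
        have h4 : (3 + c ^ 2) * (4 * (u ^ 2 + 2 * c * u + 1) - s ^ 2 * u ^ 2) =
            ((3 + c ^ 2) * u + 4 * c) ^ 2 + 12 * s ^ 2 := by
          linear_combination (-((3 + c ^ 2) * u ^ 2) - 12) * hcs
        nlinarith [h4, sq_nonneg ((3 + c ^ 2) * u + 4 * c), sq_nonneg c, mul_pos hs hs]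
      have hlognn : 0 ≤ Real.log u := Real.log_nonneg hu1.le
      have hlog : Real.log u ≤ 2 * u ^ ((1:ℝ)/2) := by
        have := Real.log_le_rpow_div hu0.le (show (0:ℝ) < 1/2 by norm_num)
        calc Real.log u ≤ u ^ ((1:ℝ)/2) / (1/2) := by simpa using this
          _ = 2 * u ^ ((1:ℝ)/2) := by ring
      rw [Real.norm_eq_abs, abs_div, abs_of_pos hq, abs_of_nonneg hlognn]
      rw [div_le_iff₀ hq]
      have hpow : u ^ (-(3:ℝ)/2) * u ^ 2 = u ^ ((1:ℝ)/2) := by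
        rw [← Real.rpow_natCast u 2, ← Real.rpow_add hu0]
        norm_num
      have hppos : 0 < u ^ (-(3:ℝ)/2) := Real.rpow_pos_of_pos hu0 _
      calc Real.log u ≤ 2 * u ^ ((1:ℝ)/2) := hlog
        _ = 2 / s ^ 2 * u ^ (-(3:ℝ)/2) * (s ^ 2 * u ^ 2) := by
            rw [show (2:ℝ) / s ^ 2 * u ^ (-(3:ℝ)/2) * (s ^ 2 * u ^ 2)
                = 2 * (u ^ (-(3:ℝ)/2) * u ^ 2) * (s ^ 2 / s ^ 2) by ring,
              div_self (by positivity : (s:ℝ) ^ 2 ≠ 0), hpow]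
            ring
        _ ≤ 2 / s ^ 2 * u ^ (-(3:ℝ)/2) * (4 * (u ^ 2 + 2 * c * u + 1)) := by
            apply mul_le_mul_of_nonneg_left hqu
            positivity
        _ = 8 / s ^ 2 * u ^ (-(3:ℝ)/2) * (u ^ 2 + 2 * c * u + 1) := by ring

private lemma logq_integral_zero {c s : ℝ} (hs : 0 < s) (hcs : c ^ 2 + s ^ 2 = 1) :
    ∫ u in Ioi (0 : ℝ), Real.log u / (u ^ 2 + 2 * c * u + 1) = 0 := by
  set g : ℝ → ℝ := fun u => Real.log u / (u ^ 2 + 2 * c * u + 1) with hg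
  have h := integral_comp_rpow_Ioi g (p := -1) (by norm_num)
  have h2 : ∫ x in Ioi (0:ℝ), (|(-1:ℝ)| * x ^ ((-1:ℝ) - 1)) • g (x ^ (-1:ℝ)) =
      ∫ x in Ioi (0:ℝ), -g x := by
    apply setIntegral_congr_fun measurableSet_Ioi
    intro x hx
    have hx0 : (0:ℝ) < x := hx
    have hq := q_pos hs hcs x
    have hqi := q_pos hs hcs x⁻¹
    simp only [smul_eq_mul, abs_neg, abs_one, one_mul]
    rw [show ((-1:ℝ) - 1) = (-2 : ℝ) by norm_num, Real.rpow_neg_one,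
      show ((-2:ℝ)) = ((-2 : ℤ) : ℝ) by norm_num, Real.rpow_intCast]
    rw [hg]
    simp only [Real.log_inv]
    have hx' : x ≠ 0 := hx0.ne'
    have hq' : x ^ 2 + 2 * c * x + 1 ≠ 0 := hq.ne'
    have hkey : (x⁻¹) ^ 2 + 2 * c * x⁻¹ + 1 = (x ^ 2 + 2 * c * x + 1) / x ^ 2 := by
      field_simp
      ring
    rw [hkey]
    rw [zpow_neg, zpow_two]
    field_simp
  rw [h2, integral_neg] at h
  linarith [h]

theorem stmt16 (α θ : ℝ) (hα : 0 < α) (hθ : θ ∈ Set.Ioo 0 π) :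
    ∫ x in Set.Ioi (0:ℝ), Real.log x / (x ^ 2 + 2 * α * x * Real.cos θ + α ^ 2) =
      θ * Real.log α / (α * Real.sin θ) := by
  obtain ⟨hθ0, hθπ⟩ := hθ
  set c := Real.cos θ with hc
  set s := Real.sin θ with hsdef
  have hs : 0 < s := Real.sin_pos_of_pos_of_lt_pi hθ0 hθπ
  have hcs : c ^ 2 + s ^ 2 = 1 := by rw [hc, hsdef]; exact Real.cos_sq_add_sin_sq θ
  -- arctan (c/s) = π/2 - θ
  have harctan : arctan (c / s) = π / 2 - θ := by
    have h1 : c / s = Real.tan (π / 2 - θ) := by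
      rw [Real.tan_eq_sin_div_cos, Real.sin_pi_div_two_sub, Real.cos_pi_div_two_sub]
    rw [h1, Real.arctan_tan (by linarith) (by linarith)]
  -- substitution x = α u
  have hsub := integral_comp_mul_left_Ioi
    (fun x : ℝ => Real.log x / (x ^ 2 + 2 * α * x * c + α ^ 2)) 0 hα
  simp only [mul_zero, smul_eq_mul] at hsub
  have hrw : ∫ u in Ioi (0:ℝ),
      Real.log (α * u) / ((α * u) ^ 2 + 2 * α * (α * u) * c + α ^ 2) =
      ∫ u in Ioi (0:ℝ), (α ^ 2)⁻¹ *
        (Real.log α * (1 / (u ^ 2 + 2 * c * u + 1)) +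
          Real.log u / (u ^ 2 + 2 * c * u + 1)) := by
    apply setIntegral_congr_fun measurableSet_Ioi
    intro u hu
    dsimp only
    have hu0 : (0:ℝ) < u := hu
    have hq := q_pos hs hcs u
    rw [Real.log_mul hα.ne' hu0.ne']
    have hden : (α * u) ^ 2 + 2 * α * (α * u) * c + α ^ 2 =
        α ^ 2 * (u ^ 2 + 2 * c * u + 1) := by ring
    rw [hden]
    field_simp
  rw [hrw] at hsub
  rw [integral_const_mul, integral_add ((q_integrable hs hcs).const_mul _)
    (logq_integrable hs hcs), integral_const_mul, q_integral hs hcs,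
    logq_integral_zero hs hcs, harctan] at hsub
  have key : ∫ x in Ioi (0:ℝ), Real.log x / (x ^ 2 + 2 * α * x * c + α ^ 2) =
      α * ((α ^ 2)⁻¹ * (Real.log α * (π / 2 / s - (π / 2 - θ) / s) + 0)) := by
    rw [hsub]; field_simp
  rw [key]
  field_simp
  ring
end
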